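/- For all real numbers r > 0 and θ > 0, ∫_0^r (2/(θ·√(2π))) · e^{−t²/(2θ²)} · (1 − t/r) dt = 1 − 2·Φ(−r/θ) − (2θ/(√(2π)·r)) · (1 − e^{−r²/(2θ²)}), where Φ denotes the cumulative distribution function of the standard normal distribution N(0,1). -/

import Mathlib

open MeasureTheory Real Set

noncomputable def phi (x : ℝ) : ℝ := (Real.sqrt (2 * Real.pi))⁻¹ * Real.exp (-x ^ 2 / 2)

lemma phi_eq_pdf (x : ℝ) : phi x = ProbabilityTheory.gaussianPDFReal 0 1 x := by
  simp [phi, ProbabilityTheory.gaussianPDFReal]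

lemma phi_integrable : Integrable phi := by
  have h : Integrable (fun x : ℝ => Real.exp (-(2⁻¹ : ℝ) * x ^ 2)) :=
    integrable_exp_neg_mul_sq (by norm_num)
  have := h.const_mul (Real.sqrt (2 * Real.pi))⁻¹
  refine this.congr ?_
  filter_upwards with x
  simp only [phi]
  ring_nf

lemma stdNormalCDF' (x : ℝ) :
    ((ProbabilityTheory.gaussianReal 0 1) (Set.Iic x)).toReal = ∫ y in Iic x, phi y := by
  rw [ProbabilityTheory.gaussianReal_apply_eq_integral 0 one_ne_zero,
    ENNReal.toReal_ofReal (integral_nonneg fun y => ProbabilityTheory.gaussianPDFReal_nonneg 0 1 y)]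
  exact integral_congr_ae (Filter.Eventually.of_forall fun y => (phi_eq_pdf y).symm)

lemma phi_total : ∫ y, phi y = 1 := by
  have h := ProbabilityTheory.gaussianReal_apply_eq_integral (v := 1) 0 one_ne_zero Set.univ
  have h1 : (ProbabilityTheory.gaussianReal 0 1) Set.univ = 1 := measure_univ
  rw [h1] at h
  have h2 : ∫ x in Set.univ, ProbabilityTheory.gaussianPDFReal 0 1 x = ∫ y, phi y := by
    rw [setIntegral_univ]
    exact integral_congr_ae (Filter.Eventually.of_forall fun y => (phi_eq_pdf y).symm)
  rw [h2] at h
  have hnn : 0 ≤ ∫ y, phi y := integral_nonneg fun y => by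
    unfold phi; positivity
  have h3 := congrArg ENNReal.toReal h
  rwa [ENNReal.toReal_ofReal hnn, ENNReal.toReal_one, eq_comm] at h3

lemma phi_even (x : ℝ) : phi (-x) = phi x := by simp [phi]

lemma phi_tail (a : ℝ) : ∫ y in Ioi a, phi y = ∫ y in Iic (-a), phi y := by
  rw [← integral_comp_neg_Ioi]
  exact integral_congr_ae (Filter.Eventually.of_forall fun y => (phi_even y).symm)

lemma key (a : ℝ) :
    1 - 2 * ((ProbabilityTheory.gaussianReal 0 1) (Set.Iic (-a))).toReal
      = 2 * ∫ y in (0:ℝ)..a, phi y := by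
  rw [stdNormalCDF']
  have hint : Integrable phi := phi_integrable
  have h1 : (∫ y in Iic a, phi y) + ∫ y in Ioi a, phi y = 1 := by
    rw [← phi_total, ← intervalIntegral.integral_Iic_add_Ioi hint.integrableOn hint.integrableOn]
  have h2 : (∫ y in Iic a, phi y) - ∫ y in Iic (-a), phi y = ∫ y in (-a)..a, phi y :=
    intervalIntegral.integral_Iic_sub_Iic hint.integrableOn hint.integrableOn
  have h3 : ∫ y in (-a)..a, phi y = 2 * ∫ y in (0:ℝ)..a, phi y := by
    have key2 : ∫ y in (-a)..(0:ℝ), phi y = ∫ y in (0:ℝ)..a, phi y := by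
      have := intervalIntegral.integral_comp_neg (a := (0:ℝ)) (b := a) phi
      rw [neg_zero] at this
      rw [← this]
      exact intervalIntegral.integral_congr fun y _ => phi_even y
    rw [← intervalIntegral.integral_add_adjacent_intervals (b := (0:ℝ))
      hint.intervalIntegrable hint.intervalIntegrable, key2]
    ring
  rw [phi_tail a] at h1
  linarith

lemma stepA (r θ : ℝ) (hr : 0 < r) (hθ : 0 < θ) :
    ∫ t in (0:ℝ)..r, (2 / (θ * Real.sqrt (2 * Real.pi))) * Real.exp (-t ^ 2 / (2 * θ ^ 2))
      = 2 * ∫ y in (0:ℝ)..(r/θ), phi y := by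
  have h : ∀ t : ℝ, (2 / (θ * Real.sqrt (2 * Real.pi))) * Real.exp (-t ^ 2 / (2 * θ ^ 2))
      = (2/θ) * phi (t / θ) := by
    intro t
    have hs : (0:ℝ) < Real.sqrt (2 * Real.pi) := Real.sqrt_pos.2 (by positivity)
    rw [phi]
    have he : (-(t / θ) ^ 2 / 2 : ℝ) = -t ^ 2 / (2 * θ ^ 2) := by
      rw [div_pow]
      ring
    rw [he]
    have hs' : Real.sqrt (2 * Real.pi) ≠ 0 := hs.ne'
    field_simp
  simp_rw [h]
  rw [intervalIntegral.integral_const_mul, intervalIntegral.integral_comp_div _ hθ.ne']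
  rw [zero_div]
  rw [smul_eq_mul]
  field_simp

lemma stepB (r θ : ℝ) (hθ : 0 < θ) :
    ∫ t in (0:ℝ)..r, t * Real.exp (-t ^ 2 / (2 * θ ^ 2))
      = θ ^ 2 * (1 - Real.exp (-r ^ 2 / (2 * θ ^ 2))) := by
  have hF : ∀ t ∈ Set.uIcc (0:ℝ) r, HasDerivAt (fun t => -θ ^ 2 * Real.exp (-t ^ 2 / (2 * θ ^ 2)))
      (t * Real.exp (-t ^ 2 / (2 * θ ^ 2))) t := by
    intro t _
    have h1 : HasDerivAt (fun t : ℝ => -t ^ 2 / (2 * θ ^ 2)) (-t / θ ^ 2) t := by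
      have : HasDerivAt (fun t : ℝ => -t ^ 2) (-(2 * t)) t := by
        exact (hasDerivAt_pow 2 t).neg.congr_deriv (by norm_num)
      refine (this.div_const (2 * θ ^ 2)).congr_deriv ?_
      field_simp
    have h2 := (h1.exp).const_mul (-θ ^ 2)
    refine h2.congr_deriv ?_
    field_simp
  rw [intervalIntegral.integral_eq_sub_of_hasDerivAt hF ((Continuous.mul continuous_id (by fun_prop)).intervalIntegrable _ _)]
  simp
  ring



/-- The cumulative distribution function `Φ` of the standard normal
distribution `N(0, 1)`. -/
noncomputable def stdNormalCDF (x : ℝ) : ℝ :=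
  ((ProbabilityTheory.gaussianReal 0 1) (Set.Iic x)).toReal

/-- Closed form of the p-stable LSH collision-probability integral:
`∫_0^r (2/(θ√(2π))) e^{−t²/(2θ²)} (1 − t/r) dt
  = 1 − 2Φ(−r/θ) − (2θ/(√(2π) r))(1 − e^{−r²/(2θ²)})`. -/
theorem collision_probability_integral (r θ : ℝ) (hr : 0 < r) (hθ : 0 < θ) :
    ∫ t in (0 : ℝ)..r,
        (2 / (θ * Real.sqrt (2 * Real.pi))) * Real.exp (-t ^ 2 / (2 * θ ^ 2)) * (1 - t / r)
      = 1 - 2 * stdNormalCDF (-r / θ)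
        - (2 * θ / (Real.sqrt (2 * Real.pi) * r)) * (1 - Real.exp (-r ^ 2 / (2 * θ ^ 2))) := by
  simp only [stdNormalCDF]
  have hs : (0:ℝ) < Real.sqrt (2 * Real.pi) := Real.sqrt_pos.2 (by positivity)
  have hc1 : Continuous fun t : ℝ => (2 / (θ * Real.sqrt (2 * Real.pi))) *
      Real.exp (-t ^ 2 / (2 * θ ^ 2)) := by fun_prop
  have hc2 : Continuous fun t : ℝ =>
      (2 / (θ * Real.sqrt (2 * Real.pi)) / r) * (t * Real.exp (-t ^ 2 / (2 * θ ^ 2))) := by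
    fun_prop
  have hsplit : ∀ t : ℝ,
      (2 / (θ * Real.sqrt (2 * Real.pi))) * Real.exp (-t ^ 2 / (2 * θ ^ 2)) * (1 - t / r)
      = (2 / (θ * Real.sqrt (2 * Real.pi))) * Real.exp (-t ^ 2 / (2 * θ ^ 2))
        - (2 / (θ * Real.sqrt (2 * Real.pi)) / r) * (t * Real.exp (-t ^ 2 / (2 * θ ^ 2))) := by
    intro t; ring
  simp_rw [hsplit]
  rw [intervalIntegral.integral_sub (hc1.intervalIntegrable _ _) (hc2.intervalIntegrable _ _),
    stepA r θ hr hθ, intervalIntegral.integral_const_mul, stepB r θ hθ]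
  have hkey := key (r / θ)
  rw [show -(r/θ) = -r/θ by ring] at hkey
  rw [← hkey]
  field_simp
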